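/- Let k be a commutative ring, X a set, and Ω a semigroup. The tridendriform family algebra DTF(X,Ω) is generated, under the operations {≺_ω, ≻_ω | ω ∈ Ω} and ·, by the set of single-vertex trees {stree(x) | x ∈ X}, where stree(x) = ∨²_{x;(1,1)}(|,|) is the tree with one internal binary vertex decorated by x. That is, the smallest k-submodule of DTF(X,Ω) containing all stree(x) and closed under all operations ≺_ω, ≻_ω (ω ∈ Ω) and · equals DTF(X,Ω). -/

import Mathlib

/-- An `X`-valently decorated `Ω`-typed Schröder tree with at least one internal vertex.
`node c₀ mid xₘ cₘ` is the grafting `∨^{m+1}_{x₁,…,xₘ;(α₀,…,αₘ)}(T⁽⁰⁾,…,T⁽ᵐ⁾)`: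
the root has children `c₀ = T⁽⁰⁾`, the children `T⁽¹⁾,…,T⁽ᵐ⁻¹⁾` listed in
`mid = [(x₁,T⁽¹⁾),…,(x_{m-1},T⁽ᵐ⁻¹⁾)]`, and the last child `cₘ = T⁽ᵐ⁾`; the root vertex
is decorated by `(x₁,…,xₘ) ∈ X^m`.  A child `none` is a leaf `|` (edge typed by the
adjoined identity `1 ∈ Ω¹`), a child `some (t, α)` is a nonempty subtree with internal
edge typed `α ∈ Ω`. -/
inductive SchT (X Ω : Type) : Type where
  | node : Option (SchT X Ω × Ω) → List (X × Option (SchT X Ω × Ω)) → X →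
      Option (SchT X Ω × Ω) → SchT X Ω

namespace SchT

variable {X Ω : Type}

/-- The single-vertex tree `stree x = ∨²_{x;(1,1)}(|,|)`. -/
def stree (x : X) : SchT X Ω := .node none [] x none

variable [Semigroup Ω] (k : Type) [CommRing k]

mutual
/-- `T ≺_ω U` on trees, with values in the free module on trees. -/
noncomputable def tprec : SchT X Ω → Ω → SchT X Ω → (SchT X Ω →₀ k)
  | .node c0 mid xm none, ω, U => Finsupp.single (.node c0 mid xm (some (U, ω))) 1
  | .node c0 mid xm (some (t, α)), ω, U =>
      Finsupp.mapDomain (fun s => SchT.node c0 mid xm (some (s, α * ω)))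
        (tsucc t α U + tprec t ω U + tdot t U)
  termination_by T _ U => sizeOf T + sizeOf U
  decreasing_by all_goals (simp_wf; omega)

/-- `T ≻_ω U` on trees, with values in the free module on trees. -/
noncomputable def tsucc : SchT X Ω → Ω → SchT X Ω → (SchT X Ω →₀ k)
  | T, ω, .node none mid yn dn => Finsupp.single (.node (some (T, ω)) mid yn dn) 1
  | T, ω, .node (some (u, β)) mid yn dn =>
      Finsupp.mapDomain (fun s => SchT.node (some (s, ω * β)) mid yn dn)
        (tsucc T ω u + tprec T β u + tdot T u)
  termination_by T _ U => sizeOf T + sizeOf U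
  decreasing_by all_goals (simp_wf; omega)

/-- `T · U` on trees, with values in the free module on trees. -/
noncomputable def tdot : SchT X Ω → SchT X Ω → (SchT X Ω →₀ k)
  | .node c0 mid xm none, .node none mid' yn dn =>
      Finsupp.single (.node c0 (mid ++ (xm, none) :: mid') yn dn) 1
  | .node c0 mid xm none, .node (some (u, β)) mid' yn dn =>
      Finsupp.single (.node c0 (mid ++ (xm, some (u, β)) :: mid') yn dn) 1
  | .node c0 mid xm (some (t, α)), .node none mid' yn dn =>
      Finsupp.single (.node c0 (mid ++ (xm, some (t, α)) :: mid') yn dn) 1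
  | .node c0 mid xm (some (t, α)), .node (some (u, β)) mid' yn dn =>
      Finsupp.mapDomain (fun s => SchT.node c0 (mid ++ (xm, some (s, α * β)) :: mid') yn dn)
        (tsucc t α u + tprec t β u + tdot t u)
  termination_by T U => sizeOf T + sizeOf U
  decreasing_by all_goals (simp_wf; omega)
end

/-- The bilinear extension of `≺_ω` to the free module `DTF(X,Ω) = SchT X Ω →₀ k`. -/
noncomputable def dprec (ω : Ω) (a b : SchT X Ω →₀ k) : SchT X Ω →₀ k :=
  a.sum fun T ca => b.sum fun U cb => (ca * cb) • tprec k T ω U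

/-- The bilinear extension of `≻_ω` to the free module `DTF(X,Ω) = SchT X Ω →₀ k`. -/
noncomputable def dsucc (ω : Ω) (a b : SchT X Ω →₀ k) : SchT X Ω →₀ k :=
  a.sum fun T ca => b.sum fun U cb => (ca * cb) • tsucc k T ω U

/-- The bilinear extension of `·` to the free module `DTF(X,Ω) = SchT X Ω →₀ k`. -/
noncomputable def dmul (a b : SchT X Ω →₀ k) : SchT X Ω →₀ k :=
  a.sum fun T ca => b.sum fun U cb => (ca * cb) • tdot k T U

end SchT


open SchT in
lemma dprec_single' {X Ω : Type} [Semigroup Ω] (k : Type) [CommRing k] (ω : Ω) (T U : SchT X Ω) :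
    dprec k ω (Finsupp.single T (1:k)) (Finsupp.single U 1) = tprec k T ω U := by
  unfold dprec
  rw [Finsupp.sum_single_index, Finsupp.sum_single_index] <;> simp

open SchT in
lemma dsucc_single' {X Ω : Type} [Semigroup Ω] (k : Type) [CommRing k] (ω : Ω) (T U : SchT X Ω) :
    dsucc k ω (Finsupp.single T (1:k)) (Finsupp.single U 1) = tsucc k T ω U := by
  unfold dsucc
  rw [Finsupp.sum_single_index, Finsupp.sum_single_index] <;> simp

open SchT in
lemma dmul_single' {X Ω : Type} [Semigroup Ω] (k : Type) [CommRing k] (T U : SchT X Ω) :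
    dmul k (Finsupp.single T (1:k)) (Finsupp.single U 1) = tdot k T U := by
  unfold dmul
  rw [Finsupp.sum_single_index, Finsupp.sum_single_index] <;> simp

open SchT in
lemma single_tree_mem {X Ω : Type} [Semigroup Ω] (k : Type) [CommRing k]
    (S : Submodule k (SchT X Ω →₀ k))
    (h0 : ∀ x : X, Finsupp.single (stree x) (1 : k) ∈ S)
    (hp : ∀ (ω : Ω) (a b : SchT X Ω →₀ k), a ∈ S → b ∈ S → dprec k ω a b ∈ S)
    (hs : ∀ (ω : Ω) (a b : SchT X Ω →₀ k), a ∈ S → b ∈ S → dsucc k ω a b ∈ S)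
    (hd : ∀ a b : SchT X Ω →₀ k, a ∈ S → b ∈ S → dmul k a b ∈ S) :
    ∀ T : SchT X Ω, Finsupp.single T (1:k) ∈ S := by
  have key : ∀ n : ℕ, ∀ T : SchT X Ω, sizeOf T ≤ n → Finsupp.single T (1:k) ∈ S := by
    intro n
    induction n with
    | zero => intro T hT; cases T; simp at hT
    | succ n ih =>
      intro T hT
      match T with
      | .node (some (t, α)) mid x cm =>
        have h1 : Finsupp.single t (1:k) ∈ S := by
          apply ih; simp at hT ⊢; omega
        have h2 : Finsupp.single (SchT.node none mid x cm) (1:k) ∈ S := by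
          apply ih; simp at hT ⊢; omega
        have := hs α _ _ h1 h2
        rwa [dsucc_single', tsucc] at this
      | .node none ((x1, c1) :: mid) x cm =>
        have h1 : Finsupp.single (SchT.node none [] x1 c1) (1:k) ∈ S := by
          apply ih; simp at hT ⊢; omega
        have h2 : Finsupp.single (SchT.node none mid x cm) (1:k) ∈ S := by
          apply ih; simp at hT ⊢; omega
        have := hd _ _ h1 h2
        rw [dmul_single'] at this
        match c1 with
        | none => rwa [tdot] at this
        | some (t, β) => rwa [tdot] at this
      | .node none [] x (some (u, β)) =>
        have h1 : Finsupp.single (stree x) (1:k) ∈ S := h0 x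
        have h2 : Finsupp.single u (1:k) ∈ S := by
          apply ih; simp at hT ⊢; omega
        have := hp β _ _ h1 h2
        rwa [dprec_single', stree, tprec] at this
      | .node none [] x none => exact h0 x
  intro T
  exact key (sizeOf T) T le_rfl

open SchT in
/-- The tridendriform family algebra `DTF(X,Ω)` is generated, under the
operations `{≺_ω, ≻_ω | ω ∈ Ω}` and `·`, by the single-vertex trees `stree x`, `x ∈ X`:
every `k`-submodule containing all `stree x` and closed under all `≺_ω, ≻_ω` and `·` is
all of `DTF(X,Ω)`. -/
theorem DTF_generated_by_strees {X Ω : Type} [Semigroup Ω] (k : Type) [CommRing k] :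
    ∀ S : Submodule k (SchT X Ω →₀ k),
      (∀ x : X, Finsupp.single (stree x) (1 : k) ∈ S) →
      (∀ (ω : Ω) (a b : SchT X Ω →₀ k), a ∈ S → b ∈ S → dprec k ω a b ∈ S) →
      (∀ (ω : Ω) (a b : SchT X Ω →₀ k), a ∈ S → b ∈ S → dsucc k ω a b ∈ S) →
      (∀ a b : SchT X Ω →₀ k, a ∈ S → b ∈ S → dmul k a b ∈ S) →
      ∀ a : SchT X Ω →₀ k, a ∈ S := by
  intro S h0 hp hs hd a
  have key := single_tree_mem k S h0 hp hs hd
  induction a using Finsupp.induction_linear with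
  | zero => exact S.zero_mem
  | add f g hf hg => exact S.add_mem hf hg
  | single T c =>
    have : Finsupp.single T c = c • Finsupp.single T (1:k) := by
      rw [Finsupp.smul_single', mul_one]
    rw [this]
    exact S.smul_mem c (key T)
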